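/- Let m_n denote the number of independent dominating sets of the meta-chain hexagonal cactus M_n for n ≥ 1, and set m_0 = 1 (the one-vertex graph M_0 has exactly one maximal independent set). Then, in the ring of formal power series over ℚ, (1 - 3X - X² - 2X³) · (∑_{n≥0} m_n Xⁿ) = 1 + 2X + 3X². -/

import Mathlib

/-- `S` is an independent dominating set of `G`: pairwise non-adjacent, and every
vertex outside `S` has a neighbour in `S`. -/
def IsIndepDomSet {V : Type*} (G : SimpleGraph V) (S : Finset V) : Prop :=
  (∀ v ∈ S, ∀ w ∈ S, ¬ G.Adj v w) ∧ ∀ v, v ∉ S → ∃ w ∈ S, G.Adj v w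

/-- The meta-chain hexagonal cactus `M n`: `Sum.inl i` is the cut vertex `x i`
(`0 ≤ i ≤ n`) and `Sum.inr (k, t)` for `t = 0, 1, 2, 3` is `a (k+1)`, `b (k+1)`,
`c (k+1)`, `d (k+1)` respectively (`0 ≤ k ≤ n-1`); the `i`-th hexagon
(`1 ≤ i ≤ n`) is the six-cycle `x (i-1) – a i – x i – b i – c i – d i – x (i-1)`. -/
def metaHex (n : ℕ) : SimpleGraph (Fin (n + 1) ⊕ Fin n × Fin 4) :=
  SimpleGraph.fromRel fun p q =>
    match p, q with
    | Sum.inl i, Sum.inr (k, t) =>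
        ((i : ℕ) = (k : ℕ) ∧ (t = 0 ∨ t = 3)) ∨
          ((i : ℕ) = (k : ℕ) + 1 ∧ (t = 0 ∨ t = 1))
    | Sum.inr (k, t), Sum.inr (k', t') =>
        k = k' ∧ ((t = 1 ∧ t' = 2) ∨ (t = 2 ∧ t' = 3))
    | _, _ => False

/-- The number of independent dominating sets of the meta-chain hexagonal cactus `M n`. -/
noncomputable def numIDSMetaHex (n : ℕ) : ℕ :=
  Nat.card {S : Finset (Fin (n + 1) ⊕ Fin n × Fin 4) // IsIndepDomSet (metaHex n) S}

namespace MH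

abbrev Vtx (n : ℕ) := Fin (n + 1) ⊕ Fin n × Fin 4

lemma adj_inl_inl {n : ℕ} (i j : Fin (n+1)) : ¬ (metaHex n).Adj (.inl i) (.inl j) := by
  simp [metaHex, SimpleGraph.fromRel_adj]

lemma adj_inl_inr {n : ℕ} (i : Fin (n+1)) (k : Fin n) (t : Fin 4) :
    (metaHex n).Adj (.inl i) (.inr (k, t)) ↔
      ((i : ℕ) = (k : ℕ) ∧ (t = 0 ∨ t = 3)) ∨ ((i : ℕ) = (k : ℕ) + 1 ∧ (t = 0 ∨ t = 1)) := by
  simp [metaHex, SimpleGraph.fromRel_adj]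

lemma adj_inr_inl {n : ℕ} (i : Fin (n+1)) (k : Fin n) (t : Fin 4) :
    (metaHex n).Adj (.inr (k, t)) (.inl i) ↔
      ((i : ℕ) = (k : ℕ) ∧ (t = 0 ∨ t = 3)) ∨ ((i : ℕ) = (k : ℕ) + 1 ∧ (t = 0 ∨ t = 1)) := by
  rw [SimpleGraph.adj_comm]; exact adj_inl_inr i k t

lemma adj_inr_inr {n : ℕ} (k k' : Fin n) (t t' : Fin 4) :
    (metaHex n).Adj (.inr (k, t)) (.inr (k', t')) ↔
      k = k' ∧ ((t = 1 ∧ t' = 2) ∨ (t = 2 ∧ t' = 3) ∨ (t = 2 ∧ t' = 1) ∨ (t = 3 ∧ t' = 2)) := by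
  simp only [metaHex, SimpleGraph.fromRel_adj]
  constructor
  · rintro ⟨hne, h | h⟩
    · exact ⟨h.1, by tauto⟩
    · exact ⟨h.1.symm, by tauto⟩
  · rintro ⟨rfl, h⟩
    refine ⟨?_, ?_⟩
    · simp only [ne_eq, Sum.inl.injEq, Sum.inr.injEq, Prod.mk.injEq]
      rintro ⟨-, rfl⟩
      rcases h with ⟨h1,h2⟩|⟨h1,h2⟩|⟨h1,h2⟩|⟨h1,h2⟩ <;> rw [h1] at h2 <;> exact absurd h2 (by decide)
    · tauto

instance instDecAdj {n : ℕ} : DecidableRel (metaHex n).Adj := fun p q =>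
  match p, q with
  | Sum.inl i, Sum.inl j => decidable_of_iff False (by simp [adj_inl_inl])
  | Sum.inl i, Sum.inr (k, t) => decidable_of_iff' _ (adj_inl_inr i k t)
  | Sum.inr (k, t), Sum.inl i => decidable_of_iff' _ (adj_inr_inl i k t)
  | Sum.inr (k, t), Sum.inr (k', t') => decidable_of_iff' _ (adj_inr_inr k k' t t')

def xl (n : ℕ) : Vtx n := Sum.inl (Fin.last n)

def emb {n : ℕ} : Vtx n → Vtx (n+1)
  | Sum.inl i => Sum.inl i.castSucc
  | Sum.inr (k, t) => Sum.inr (k.castSucc, t)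

lemma emb_inj {n : ℕ} : Function.Injective (emb (n := n)) := by
  rintro (i | ⟨k, t⟩) (j | ⟨k', t'⟩) h <;> simp [emb] at h ⊢ <;> tauto

def embE (n : ℕ) : Vtx n ↪ Vtx (n+1) := ⟨emb, emb_inj⟩

def nX (n : ℕ) : Vtx (n+1) := Sum.inl (Fin.last (n+1))
def nA (n : ℕ) : Vtx (n+1) := Sum.inr (Fin.last n, 0)
def nB (n : ℕ) : Vtx (n+1) := Sum.inr (Fin.last n, 1)
def nC (n : ℕ) : Vtx (n+1) := Sum.inr (Fin.last n, 2)
def nD (n : ℕ) : Vtx (n+1) := Sum.inr (Fin.last n, 3)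

lemma vtx_cases {n : ℕ} (v : Vtx (n+1)) :
    (∃ u, v = emb u) ∨ v = nX n ∨ v = nA n ∨ v = nB n ∨ v = nC n ∨ v = nD n := by
  rcases v with i | ⟨k, t⟩
  · rcases Fin.eq_castSucc_or_eq_last i with ⟨j, rfl⟩ | rfl
    · exact Or.inl ⟨Sum.inl j, rfl⟩
    · exact Or.inr (Or.inl rfl)
  · rcases Fin.eq_castSucc_or_eq_last k with ⟨j, rfl⟩ | rfl
    · exact Or.inl ⟨Sum.inr (j, t), rfl⟩
    · fin_cases t
      · exact Or.inr (Or.inr (Or.inl rfl))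
      · exact Or.inr (Or.inr (Or.inr (Or.inl rfl)))
      · exact Or.inr (Or.inr (Or.inr (Or.inr (Or.inl rfl))))
      · exact Or.inr (Or.inr (Or.inr (Or.inr (Or.inr rfl))))

-- adjacency between embedded old vertices
lemma adj_emb {n : ℕ} (u v : Vtx n) :
    (metaHex (n+1)).Adj (emb u) (emb v) ↔ (metaHex n).Adj u v := by
  rcases u with i | ⟨k, t⟩ <;> rcases v with j | ⟨k', t'⟩ <;>
    simp [emb, adj_inl_inl, adj_inl_inr, adj_inr_inl, adj_inr_inr, Fin.castSucc_inj]

-- full neighbour characterizations of the five new vertices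
lemma adj_nX {n : ℕ} (w : Vtx (n+1)) :
    (metaHex (n+1)).Adj (nX n) w ↔ w = nA n ∨ w = nB n := by
  rcases w with i | ⟨k, t⟩
  · simp only [nX, nA, nB]
    simp [adj_inl_inl]
  · simp only [nX, nA, nB, adj_inl_inr, Fin.val_last, Sum.inr.injEq, Prod.mk.injEq]
    constructor
    · rintro (⟨h, -⟩ | ⟨h, ht⟩)
      · omega
      · have : (k : ℕ) = n := by omega
        have hk : k = Fin.last n := by ext; simpa using this
        rcases ht with rfl | rfl
        · exact Or.inl ⟨hk.symm ▸ rfl, rfl⟩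
        · exact Or.inr ⟨hk.symm ▸ rfl, rfl⟩
    · rintro (⟨rfl, rfl⟩ | ⟨rfl, rfl⟩) <;> simp [Fin.val_last]


lemma adj_nA {n : ℕ} (w : Vtx (n+1)) :
    (metaHex (n+1)).Adj (nA n) w ↔ w = emb (xl n) ∨ w = nX n := by
  rcases w with i | ⟨k, t⟩ <;>
    simp [nA, nX, xl, emb, adj_inr_inl, adj_inr_inr, Fin.ext_iff, Fin.val_last, Prod.ext_iff] <;>
    omega

lemma adj_nB {n : ℕ} (w : Vtx (n+1)) :
    (metaHex (n+1)).Adj (nB n) w ↔ w = nX n ∨ w = nC n := by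
  rcases w with i | ⟨k, t⟩ <;>
    simp [nB, nX, nC, adj_inr_inl, adj_inr_inr, Fin.ext_iff, Fin.val_last, Prod.ext_iff] <;>
    omega

lemma adj_nC {n : ℕ} (w : Vtx (n+1)) :
    (metaHex (n+1)).Adj (nC n) w ↔ w = nB n ∨ w = nD n := by
  rcases w with i | ⟨k, t⟩ <;>
    simp [nB, nD, nC, adj_inr_inl, adj_inr_inr, Fin.ext_iff, Fin.val_last, Prod.ext_iff] <;>
    omega

lemma adj_nD {n : ℕ} (w : Vtx (n+1)) :
    (metaHex (n+1)).Adj (nD n) w ↔ w = nC n ∨ w = emb (xl n) := by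
  rcases w with i | ⟨k, t⟩ <;>
    simp [nD, nC, xl, emb, adj_inr_inl, adj_inr_inr, Fin.ext_iff, Fin.val_last, Prod.ext_iff] <;>
    omega

lemma emb_ne_nX {n : ℕ} (u : Vtx n) : emb u ≠ nX n := by
  rcases u with i | ⟨k, t⟩ <;> simp [emb, nX, Fin.ext_iff, Fin.val_last] <;> omega

lemma emb_ne_inr {n : ℕ} (u : Vtx n) (t : Fin 4) : emb u ≠ Sum.inr (Fin.last n, t) := by
  rcases u with i | ⟨k, t'⟩ <;> simp [emb, Fin.ext_iff, Fin.val_last, Prod.ext_iff] <;> omega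


/-- Independent, and dominating except possibly at the last cut vertex. -/
def Ok (n : ℕ) (S : Finset (Vtx n)) : Prop :=
  (∀ v ∈ S, ∀ w ∈ S, ¬ (metaHex n).Adj v w) ∧
    ∀ v, v ∉ S → v ≠ xl n → ∃ w ∈ S, (metaHex n).Adj v w

/-- State at the last cut vertex: 0 = in S, 1 = dominated, 2 = undominated. -/
def st (n : ℕ) (S : Finset (Vtx n)) : ℕ :=
  if xl n ∈ S then 0 else if ∃ w ∈ S, (metaHex n).Adj (xl n) w then 1 else 2

instance {n : ℕ} (S : Finset (Vtx n)) : Decidable (Ok n S) :=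
  @instDecidableAnd _ _ (by infer_instance) (by infer_instance)

instance {n : ℕ} : DecidablePred (IsIndepDomSet (metaHex n)) := fun S =>
  @instDecidableAnd _ _ (by infer_instance) (by infer_instance)

def NN (n : ℕ) (s : ℕ) : ℕ :=
  (Finset.univ.filter (fun S : Finset (Vtx n) => Ok n S ∧ st n S = s)).card

lemma st_eq_zero {n : ℕ} {S : Finset (Vtx n)} : st n S = 0 ↔ xl n ∈ S := by
  unfold st; split_ifs with h h' <;> simp [h]

lemma st_eq_one {n : ℕ} {S : Finset (Vtx n)} :
    st n S = 1 ↔ xl n ∉ S ∧ ∃ w ∈ S, (metaHex n).Adj (xl n) w := by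
  unfold st; split_ifs with h h' <;> simp_all

lemma st_eq_two {n : ℕ} {S : Finset (Vtx n)} :
    st n S = 2 ↔ xl n ∉ S ∧ ¬ ∃ w ∈ S, (metaHex n).Adj (xl n) w := by
  unfold st; split_ifs with h h' <;> simp_all

lemma st_cases {n : ℕ} (S : Finset (Vtx n)) : st n S = 0 ∨ st n S = 1 ∨ st n S = 2 := by
  unfold st; split_ifs <;> simp

lemma ids_iff {n : ℕ} (S : Finset (Vtx n)) :
    IsIndepDomSet (metaHex n) S ↔ (Ok n S ∧ st n S = 0) ∨ (Ok n S ∧ st n S = 1) := by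
  constructor
  · rintro ⟨h1, h2⟩
    have hok : Ok n S := ⟨h1, fun v hv _ => h2 v hv⟩
    by_cases hx : xl n ∈ S
    · exact Or.inl ⟨hok, st_eq_zero.2 hx⟩
    · exact Or.inr ⟨hok, st_eq_one.2 ⟨hx, h2 _ hx⟩⟩
  · rintro (⟨⟨h1, h2⟩, hs⟩ | ⟨⟨h1, h2⟩, hs⟩) <;> refine ⟨h1, fun v hv => ?_⟩ <;>
      by_cases hvx : v = xl n
    · exact absurd (st_eq_zero.1 hs) (hvx ▸ hv)
    · exact h2 v hv hvx
    · exact hvx ▸ (st_eq_one.1 hs).2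
    · exact h2 v hv hvx

lemma numIDS_eq (n : ℕ) : numIDSMetaHex n = NN n 0 + NN n 1 := by
  rw [numIDSMetaHex, Nat.card_eq_fintype_card, Fintype.card_subtype]
  rw [NN, NN]
  rw [Finset.filter_congr (fun S _ => ids_iff S), Finset.filter_or,
    Finset.card_union_of_disjoint]
  rw [Finset.disjoint_left]
  rintro S hS hS'
  simp only [Finset.mem_filter] at hS hS'
  omega


lemma NN_zero_zero : NN 0 0 = 1 := by decide
lemma NN_zero_one : NN 0 1 = 0 := by decide
lemma NN_zero_two : NN 0 2 = 1 := by decide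

/-! ### up/down infrastructure -/

def down {n : ℕ} (S' : Finset (Vtx (n+1))) : Finset (Vtx n) :=
  Finset.univ.filter (fun u => emb u ∈ S')

def up {n : ℕ} (pat : Finset (Vtx (n+1))) (S : Finset (Vtx n)) : Finset (Vtx (n+1)) :=
  S.map (embE n) ∪ pat

lemma mem_down {n : ℕ} {S' : Finset (Vtx (n+1))} {u : Vtx n} :
    u ∈ down S' ↔ emb u ∈ S' := by simp [down]

lemma mem_map_emb {n : ℕ} {S : Finset (Vtx n)} {u : Vtx n} :
    emb u ∈ S.map (embE n) ↔ u ∈ S := Finset.mem_map' (embE n)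

lemma xl_succ (n : ℕ) : xl (n+1) = nX n := rfl

-- emb–new adjacency
lemma not_adj_emb_nX {n : ℕ} (u : Vtx n) : ¬ (metaHex (n+1)).Adj (emb u) (nX n) := by
  intro h
  rcases (adj_nX _).1 h.symm with h' | h'
  · exact emb_ne_inr u 0 h'
  · exact emb_ne_inr u 1 h'

lemma adj_emb_nA {n : ℕ} (u : Vtx n) :
    (metaHex (n+1)).Adj (emb u) (nA n) ↔ u = xl n := by
  rw [SimpleGraph.adj_comm, adj_nA]
  constructor
  · rintro (h | h)
    · exact emb_inj h
    · exact absurd h (emb_ne_nX u)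
  · rintro rfl; exact Or.inl rfl

lemma not_adj_emb_nB {n : ℕ} (u : Vtx n) : ¬ (metaHex (n+1)).Adj (emb u) (nB n) := by
  intro h
  rcases (adj_nB _).1 h.symm with h' | h'
  · exact emb_ne_nX u h'
  · exact emb_ne_inr u 2 h'

lemma not_adj_emb_nC {n : ℕ} (u : Vtx n) : ¬ (metaHex (n+1)).Adj (emb u) (nC n) := by
  intro h
  rcases (adj_nC _).1 h.symm with h' | h'
  · exact emb_ne_inr u 1 h'
  · exact emb_ne_inr u 3 h'

lemma adj_emb_nD {n : ℕ} (u : Vtx n) :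
    (metaHex (n+1)).Adj (emb u) (nD n) ↔ u = xl n := by
  rw [SimpleGraph.adj_comm, adj_nD]
  constructor
  · rintro (h | h)
    · exact absurd h (emb_ne_inr u 2)
    · exact emb_inj h
  · rintro rfl; exact Or.inr rfl

/-- A dominator of an embedded vertex other than the last cut vertex is old. -/
lemma dominator_old {n : ℕ} {S' : Finset (Vtx (n+1))} {u : Vtx n} (hu : u ≠ xl n)
    {w : Vtx (n+1)} (hw : w ∈ S') (hadj : (metaHex (n+1)).Adj (emb u) w) :
    ∃ w₀ ∈ down S', (metaHex n).Adj u w₀ := by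
  rcases vtx_cases w with ⟨w₀, rfl⟩ | rfl | rfl | rfl | rfl | rfl
  · exact ⟨w₀, mem_down.2 hw, (adj_emb u w₀).1 hadj⟩
  · exact absurd hadj (not_adj_emb_nX u)
  · exact absurd ((adj_emb_nA u).1 hadj) hu
  · exact absurd hadj (not_adj_emb_nB u)
  · exact absurd hadj (not_adj_emb_nC u)
  · exact absurd ((adj_emb_nD u).1 hadj) hu

lemma down_ok {n : ℕ} {S' : Finset (Vtx (n+1))} (h : Ok (n+1) S') : Ok n (down S') := by
  constructor
  · intro v hv w hw hadj
    exact h.1 _ (mem_down.1 hv) _ (mem_down.1 hw) ((adj_emb v w).2 hadj)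
  · intro u hu hux
    obtain ⟨w, hw, hadj⟩ := h.2 (emb u) (fun hh => hu (mem_down.2 hh)) (emb_ne_nX u)
    exact dominator_old hux hw hadj

/-- If the last cut vertex is undominated by new vertices, it has an old dominator. -/
lemma old_dominator_xl {n : ℕ} {S' : Finset (Vtx (n+1))} (h : Ok (n+1) S')
    (hA : nA n ∉ S') (hD : nD n ∉ S') (hx : emb (xl n) ∉ S') :
    ∃ w ∈ down S', (metaHex n).Adj (xl n) w := by
  obtain ⟨w, hw, hadj⟩ := h.2 (emb (xl n)) hx (emb_ne_nX _)
  rcases vtx_cases w with ⟨w₀, rfl⟩ | rfl | rfl | rfl | rfl | rfl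
  · exact ⟨w₀, mem_down.2 hw, (adj_emb _ w₀).1 hadj⟩
  · exact absurd hadj (not_adj_emb_nX _)
  · exact absurd hw hA
  · exact absurd hadj (not_adj_emb_nB _)
  · exact absurd hadj (not_adj_emb_nC _)
  · exact absurd hw hD

@[simp] lemma embE_apply {n : ℕ} (u : Vtx n) : embE n u = emb u := rfl

lemma mem_up_emb {n : ℕ} {pat : Finset (Vtx (n+1))} {S : Finset (Vtx n)} {u : Vtx n}
    (h : emb u ∉ pat) : emb u ∈ up pat S ↔ u ∈ S := by
  rw [up, Finset.mem_union]
  constructor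
  · rintro (hm | hp)
    · exact mem_map_emb.1 hm
    · exact absurd hp h
  · exact fun hm => Or.inl (mem_map_emb.2 hm)

lemma inr_last_not_mem_map {n : ℕ} {S : Finset (Vtx n)} (t : Fin 4) :
    Sum.inr (Fin.last n, t) ∉ S.map (embE n) := by
  rw [Finset.mem_map]
  rintro ⟨u, -, h⟩
  exact emb_ne_inr u t (by simpa using h)

lemma nX_not_mem_map {n : ℕ} {S : Finset (Vtx n)} : nX n ∉ S.map (embE n) := by
  rw [Finset.mem_map]
  rintro ⟨u, -, h⟩
  exact emb_ne_nX u (by simpa using h)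

lemma nA_not_mem_map {n : ℕ} {S : Finset (Vtx n)} : nA n ∉ S.map (embE n) :=
  inr_last_not_mem_map 0
lemma nB_not_mem_map {n : ℕ} {S : Finset (Vtx n)} : nB n ∉ S.map (embE n) :=
  inr_last_not_mem_map 1
lemma nC_not_mem_map {n : ℕ} {S : Finset (Vtx n)} : nC n ∉ S.map (embE n) :=
  inr_last_not_mem_map 2
lemma nD_not_mem_map {n : ℕ} {S : Finset (Vtx n)} : nD n ∉ S.map (embE n) :=
  inr_last_not_mem_map 3

lemma mem_up_new {n : ℕ} {pat : Finset (Vtx (n+1))} {S : Finset (Vtx n)} {w : Vtx (n+1)}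
    (h : w ∉ S.map (embE n)) : w ∈ up pat S ↔ w ∈ pat := by
  rw [up, Finset.mem_union]
  simp [h]

lemma nA_ne_xl {n : ℕ} : (nA n : Vtx (n+1)) ≠ xl (n+1) := by simp [nA, xl]
lemma nB_ne_xl {n : ℕ} : (nB n : Vtx (n+1)) ≠ xl (n+1) := by simp [nB, xl]
lemma nC_ne_xl {n : ℕ} : (nC n : Vtx (n+1)) ≠ xl (n+1) := by simp [nC, xl]
lemma nD_ne_xl {n : ℕ} : (nD n : Vtx (n+1)) ≠ xl (n+1) := by simp [nD, xl]

lemma dom_nA {n : ℕ} {S' : Finset (Vtx (n+1))} (hok : Ok (n+1) S') (h : nA n ∉ S') :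
    emb (xl n) ∈ S' ∨ nX n ∈ S' := by
  obtain ⟨w, hw, hadj⟩ := hok.2 (nA n) h nA_ne_xl
  rcases (adj_nA w).1 hadj with rfl | rfl
  exacts [Or.inl hw, Or.inr hw]

lemma dom_nB {n : ℕ} {S' : Finset (Vtx (n+1))} (hok : Ok (n+1) S') (h : nB n ∉ S') :
    nX n ∈ S' ∨ nC n ∈ S' := by
  obtain ⟨w, hw, hadj⟩ := hok.2 (nB n) h nB_ne_xl
  rcases (adj_nB w).1 hadj with rfl | rfl
  exacts [Or.inl hw, Or.inr hw]

lemma dom_nC {n : ℕ} {S' : Finset (Vtx (n+1))} (hok : Ok (n+1) S') (h : nC n ∉ S') :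
    nB n ∈ S' ∨ nD n ∈ S' := by
  obtain ⟨w, hw, hadj⟩ := hok.2 (nC n) h nC_ne_xl
  rcases (adj_nC w).1 hadj with rfl | rfl
  exacts [Or.inl hw, Or.inr hw]

lemma dom_nD {n : ℕ} {S' : Finset (Vtx (n+1))} (hok : Ok (n+1) S') (h : nD n ∉ S') :
    nC n ∈ S' ∨ emb (xl n) ∈ S' := by
  obtain ⟨w, hw, hadj⟩ := hok.2 (nD n) h nD_ne_xl
  rcases (adj_nD w).1 hadj with rfl | rfl
  exacts [Or.inl hw, Or.inr hw]

lemma dom_nX {n : ℕ} {S' : Finset (Vtx (n+1))} (hst : st (n+1) S' = 1) :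
    nA n ∈ S' ∨ nB n ∈ S' := by
  obtain ⟨-, w, hw, hadj⟩ := st_eq_one.1 hst
  rcases (adj_nX w).1 hadj with rfl | rfl
  exacts [Or.inl hw, Or.inr hw]

lemma card_XD (n : ℕ) :
    (Finset.univ.filter fun S' : Finset (Vtx (n+1)) =>
        (Ok (n+1) S' ∧ st (n+1) S' = 0) ∧ nD n ∈ S').card
      = (Finset.univ.filter fun S : Finset (Vtx n) =>
          Ok n S ∧ (st n S = 1 ∨ st n S = 2)).card := by
  have hXpat : nX n ∈ ({nX n, nD n} : Finset (Vtx (n+1))) := by simp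
  have hDpat : nD n ∈ ({nX n, nD n} : Finset (Vtx (n+1))) := by simp
  have hApat : nA n ∉ ({nX n, nD n} : Finset (Vtx (n+1))) := by
    simp [nA, nX, nD, Prod.ext_iff, Fin.ext_iff] <;> decide
  have hBpat : nB n ∉ ({nX n, nD n} : Finset (Vtx (n+1))) := by
    simp [nB, nX, nD, Prod.ext_iff, Fin.ext_iff] <;> decide
  have hCpat : nC n ∉ ({nX n, nD n} : Finset (Vtx (n+1))) := by
    simp [nC, nX, nD, Prod.ext_iff, Fin.ext_iff] <;> decide
  have hembpat : ∀ u : Vtx n, emb u ∉ ({nX n, nD n} : Finset (Vtx (n+1))) := by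
    intro u
    simp only [Finset.mem_insert, Finset.mem_singleton]
    rintro (h | h)
    exacts [emb_ne_nX u h, emb_ne_inr u 3 h]
  apply Finset.card_bij' (fun S' _ => down S') (fun S _ => up {nX n, nD n} S)
  · -- down maps into target
    intro S' hS'
    simp only [Finset.mem_filter, Finset.mem_univ, true_and] at hS' ⊢
    obtain ⟨⟨hok, hst⟩, hD⟩ := hS'
    have hX : nX n ∈ S' := st_eq_zero.1 hst
    refine ⟨down_ok hok, ?_⟩
    have hxl : xl n ∉ down S' := by
      rw [mem_down]
      intro hmem
      exact hok.1 _ hD _ hmem ((adj_nD _).2 (Or.inr rfl))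
    rcases st_cases (down S') with h0 | h1 | h2
    · exact absurd (st_eq_zero.1 h0) hxl
    · exact Or.inl h1
    · exact Or.inr h2
  · -- up maps into source
    intro S hS
    simp only [Finset.mem_filter, Finset.mem_univ, true_and] at hS ⊢
    obtain ⟨hok, hst⟩ := hS
    have hxl : xl n ∉ S := by
      rcases hst with h1 | h1
      exacts [(st_eq_one.1 h1).1, (st_eq_two.1 h1).1]
    have hmemX : nX n ∈ up ({nX n, nD n} : Finset (Vtx (n+1))) S :=
      Finset.mem_union_right _ hXpat
    have hmemD : nD n ∈ up ({nX n, nD n} : Finset (Vtx (n+1))) S :=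
      Finset.mem_union_right _ hDpat
    have key : ∀ v ∈ up ({nX n, nD n} : Finset (Vtx (n+1))) S,
        (∃ u ∈ S, v = emb u) ∨ v = nX n ∨ v = nD n := by
      intro v hv
      rcases Finset.mem_union.1 hv with h | h
      · obtain ⟨u, hu, hh⟩ := Finset.mem_map.1 h
        exact Or.inl ⟨u, hu, by simpa using hh.symm⟩
      · simp only [Finset.mem_insert, Finset.mem_singleton] at h
        tauto
    refine ⟨⟨⟨?_, ?_⟩, ?_⟩, hmemD⟩
    · -- independence
      intro v hv w hw hadj
      rcases key v hv with ⟨u, hu, rfl⟩ | rfl | rfl <;>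
        rcases key w hw with ⟨u', hu', rfl⟩ | rfl | rfl
      · exact hok.1 _ hu _ hu' ((adj_emb u u').1 hadj)
      · exact not_adj_emb_nX u hadj
      · exact hxl (((adj_emb_nD u).1 hadj) ▸ hu)
      · exact not_adj_emb_nX u' hadj.symm
      · exact (metaHex _).loopless.irrefl _ hadj
      · rcases (adj_nX _).1 hadj with h | h
        · exact absurd h (by simp [nD, nA, Prod.ext_iff, Fin.ext_iff] <;> decide)
        · exact absurd h (by simp [nD, nB, Prod.ext_iff, Fin.ext_iff] <;> decide)
      · exact hxl (((adj_emb_nD u').1 hadj.symm) ▸ hu')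
      · rcases (adj_nX _).1 hadj.symm with h | h
        · exact absurd h (by simp [nD, nA, Prod.ext_iff, Fin.ext_iff] <;> decide)
        · exact absurd h (by simp [nD, nB, Prod.ext_iff, Fin.ext_iff] <;> decide)
      · exact (metaHex _).loopless.irrefl _ hadj
    · -- domination
      intro v hv hne
      rcases vtx_cases v with ⟨u, rfl⟩ | rfl | rfl | rfl | rfl | rfl
      · have hu : u ∉ S := fun h => hv ((mem_up_emb (hembpat u)).2 h)
        by_cases hux : u = xl n
        · exact ⟨nD n, hmemD, (adj_emb_nD u).2 hux⟩
        · obtain ⟨w, hw, hadj⟩ := hok.2 u hu hux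
          exact ⟨emb w, (mem_up_emb (hembpat w)).2 hw, (adj_emb u w).2 hadj⟩
      · exact absurd (xl_succ n) hne
      · exact ⟨nX n, hmemX, (adj_nA _).2 (Or.inr rfl)⟩
      · exact ⟨nX n, hmemX, (adj_nB _).2 (Or.inl rfl)⟩
      · exact ⟨nD n, hmemD, (adj_nC _).2 (Or.inr rfl)⟩
      · exact absurd hmemD hv
    · exact st_eq_zero.2 hmemX
  · -- left inverse : down (up pat S) = S
    intro S' hS'
    simp only [Finset.mem_filter, Finset.mem_univ, true_and] at hS'
    obtain ⟨⟨hok, hst⟩, hD⟩ := hS'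
    have hX : nX n ∈ S' := st_eq_zero.1 hst
    ext v
    rcases vtx_cases v with ⟨u, rfl⟩ | rfl | rfl | rfl | rfl | rfl
    · rw [mem_up_emb (hembpat u), mem_down]
    · exact iff_of_true (Finset.mem_union_right _ hXpat) hX
    · refine iff_of_false ?_ ?_
      · rw [mem_up_new nA_not_mem_map]; exact hApat
      · intro h
        exact hok.1 _ hX _ h ((adj_nX _).2 (Or.inl rfl))
    · refine iff_of_false ?_ ?_
      · rw [mem_up_new nB_not_mem_map]; exact hBpat
      · intro h
        exact hok.1 _ hX _ h ((adj_nX _).2 (Or.inr rfl))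
    · refine iff_of_false ?_ ?_
      · rw [mem_up_new nC_not_mem_map]; exact hCpat
      · intro h
        exact hok.1 _ h _ hD ((adj_nC _).2 (Or.inr rfl))
    · exact iff_of_true (Finset.mem_union_right _ hDpat) hD
  · -- right inverse : down (up pat S) = S  (old side)
    intro S hS
    ext u
    rw [mem_down, mem_up_emb (hembpat u)]

lemma card_XC (n : ℕ) :
    (Finset.univ.filter fun S' : Finset (Vtx (n+1)) =>
        (Ok (n+1) S' ∧ st (n+1) S' = 0) ∧ nD n ∉ S').card
      = (Finset.univ.filter fun S : Finset (Vtx n) =>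
          Ok n S ∧ (st n S = 0 ∨ st n S = 1)).card := by
  have hXpat : nX n ∈ ({nX n, nC n} : Finset (Vtx (n+1))) := by simp
  have hCpat : nC n ∈ ({nX n, nC n} : Finset (Vtx (n+1))) := by simp
  have hApat : nA n ∉ ({nX n, nC n} : Finset (Vtx (n+1))) := by
    simp [nA, nX, nC, Prod.ext_iff, Fin.ext_iff] <;> decide
  have hBpat : nB n ∉ ({nX n, nC n} : Finset (Vtx (n+1))) := by
    simp [nB, nX, nC, Prod.ext_iff, Fin.ext_iff] <;> decide
  have hDpat : nD n ∉ ({nX n, nC n} : Finset (Vtx (n+1))) := by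
    simp [nD, nX, nC, Prod.ext_iff, Fin.ext_iff] <;> decide
  have hembpat : ∀ u : Vtx n, emb u ∉ ({nX n, nC n} : Finset (Vtx (n+1))) := by
    intro u
    simp only [Finset.mem_insert, Finset.mem_singleton]
    rintro (h | h)
    exacts [emb_ne_nX u h, emb_ne_inr u 2 h]
  apply Finset.card_bij' (fun S' _ => down S') (fun S _ => up {nX n, nC n} S)
  · intro S' hS'
    simp only [Finset.mem_filter, Finset.mem_univ, true_and] at hS' ⊢
    obtain ⟨⟨hok, hst⟩, hD⟩ := hS'
    have hX : nX n ∈ S' := st_eq_zero.1 hst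
    have hA : nA n ∉ S' := fun h => hok.1 _ hX _ h ((adj_nX _).2 (Or.inl rfl))
    refine ⟨down_ok hok, ?_⟩
    by_cases hx : emb (xl n) ∈ S'
    · exact Or.inl (st_eq_zero.2 (mem_down.2 hx))
    · refine Or.inr (st_eq_one.2 ⟨fun h => hx (mem_down.1 h), ?_⟩)
      exact old_dominator_xl hok hA hD hx
  · intro S hS
    simp only [Finset.mem_filter, Finset.mem_univ, true_and] at hS ⊢
    obtain ⟨hok, hst⟩ := hS
    have hmemX : nX n ∈ up ({nX n, nC n} : Finset (Vtx (n+1))) S :=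
      Finset.mem_union_right _ hXpat
    have hmemC : nC n ∈ up ({nX n, nC n} : Finset (Vtx (n+1))) S :=
      Finset.mem_union_right _ hCpat
    have key : ∀ v ∈ up ({nX n, nC n} : Finset (Vtx (n+1))) S,
        (∃ u ∈ S, v = emb u) ∨ v = nX n ∨ v = nC n := by
      intro v hv
      rcases Finset.mem_union.1 hv with h | h
      · obtain ⟨u, hu, hh⟩ := Finset.mem_map.1 h
        exact Or.inl ⟨u, hu, by simpa using hh.symm⟩
      · simp only [Finset.mem_insert, Finset.mem_singleton] at h
        tauto
    refine ⟨⟨⟨?_, ?_⟩, ?_⟩, ?_⟩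
    · intro v hv w hw hadj
      rcases key v hv with ⟨u, hu, rfl⟩ | rfl | rfl <;>
        rcases key w hw with ⟨u', hu', rfl⟩ | rfl | rfl
      · exact hok.1 _ hu _ hu' ((adj_emb u u').1 hadj)
      · exact not_adj_emb_nX u hadj
      · exact not_adj_emb_nC u hadj
      · exact not_adj_emb_nX u' hadj.symm
      · exact (metaHex _).loopless.irrefl _ hadj
      · rcases (adj_nX _).1 hadj with h | h
        · exact absurd h (by simp [nC, nA, Prod.ext_iff, Fin.ext_iff] <;> decide)
        · exact absurd h (by simp [nC, nB, Prod.ext_iff, Fin.ext_iff] <;> decide)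
      · exact not_adj_emb_nC u' hadj.symm
      · rcases (adj_nX _).1 hadj.symm with h | h
        · exact absurd h (by simp [nC, nA, Prod.ext_iff, Fin.ext_iff] <;> decide)
        · exact absurd h (by simp [nC, nB, Prod.ext_iff, Fin.ext_iff] <;> decide)
      · exact (metaHex _).loopless.irrefl _ hadj
    · intro v hv hne
      rcases vtx_cases v with ⟨u, rfl⟩ | rfl | rfl | rfl | rfl | rfl
      · have hu : u ∉ S := fun h => hv ((mem_up_emb (hembpat u)).2 h)
        by_cases hux : u = xl n
        · subst hux
          rcases hst with h0 | h1
          · exact absurd (st_eq_zero.1 h0) hu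
          · obtain ⟨-, w, hw, hadj⟩ := st_eq_one.1 h1
            exact ⟨emb w, (mem_up_emb (hembpat w)).2 hw, (adj_emb _ w).2 hadj⟩
        · obtain ⟨w, hw, hadj⟩ := hok.2 u hu hux
          exact ⟨emb w, (mem_up_emb (hembpat w)).2 hw, (adj_emb u w).2 hadj⟩
      · exact absurd (xl_succ n) hne
      · exact ⟨nX n, hmemX, (adj_nA _).2 (Or.inr rfl)⟩
      · exact ⟨nX n, hmemX, (adj_nB _).2 (Or.inl rfl)⟩
      · exact absurd hmemC hv
      · exact ⟨nC n, hmemC, (adj_nD _).2 (Or.inl rfl)⟩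
    · exact st_eq_zero.2 hmemX
    · rw [mem_up_new nD_not_mem_map]
      exact hDpat
  · intro S' hS'
    simp only [Finset.mem_filter, Finset.mem_univ, true_and] at hS'
    obtain ⟨⟨hok, hst⟩, hD⟩ := hS'
    have hX : nX n ∈ S' := st_eq_zero.1 hst
    have hA : nA n ∉ S' := fun h => hok.1 _ hX _ h ((adj_nX _).2 (Or.inl rfl))
    have hB : nB n ∉ S' := fun h => hok.1 _ hX _ h ((adj_nX _).2 (Or.inr rfl))
    have hC : nC n ∈ S' := by
      by_contra hC
      rcases dom_nC hok hC with h | h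
      exacts [hB h, hD h]
    ext v
    rcases vtx_cases v with ⟨u, rfl⟩ | rfl | rfl | rfl | rfl | rfl
    · rw [mem_up_emb (hembpat u), mem_down]
    · exact iff_of_true (Finset.mem_union_right _ hXpat) hX
    · refine iff_of_false ?_ hA
      rw [mem_up_new nA_not_mem_map]; exact hApat
    · refine iff_of_false ?_ hB
      rw [mem_up_new nB_not_mem_map]; exact hBpat
    · exact iff_of_true (Finset.mem_union_right _ hCpat) hC
    · refine iff_of_false ?_ hD
      rw [mem_up_new nD_not_mem_map]; exact hDpat
  · intro S hS
    ext u
    rw [mem_down, mem_up_emb (hembpat u)]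

lemma card_B (n : ℕ) :
    (Finset.univ.filter fun S' : Finset (Vtx (n+1)) =>
        ((Ok (n+1) S' ∧ st (n+1) S' = 1) ∧ nB n ∈ S') ∧ nA n ∉ S').card
      = (Finset.univ.filter fun S : Finset (Vtx n) =>
          Ok n S ∧ st n S = 0).card := by
  have hBpat : nB n ∈ ({nB n} : Finset (Vtx (n+1))) := by simp
  have hXpat : nX n ∉ ({nB n} : Finset (Vtx (n+1))) := by
    simp [nX, nB]
  have hApat : nA n ∉ ({nB n} : Finset (Vtx (n+1))) := by
    simp [nA, nB, Prod.ext_iff, Fin.ext_iff] <;> decide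
  have hCpat : nC n ∉ ({nB n} : Finset (Vtx (n+1))) := by
    simp [nC, nB, Prod.ext_iff, Fin.ext_iff] <;> decide
  have hDpat : nD n ∉ ({nB n} : Finset (Vtx (n+1))) := by
    simp [nD, nB, Prod.ext_iff, Fin.ext_iff] <;> decide
  have hembpat : ∀ u : Vtx n, emb u ∉ ({nB n} : Finset (Vtx (n+1))) := by
    intro u
    simp only [Finset.mem_singleton]
    exact emb_ne_inr u 1
  apply Finset.card_bij' (fun S' _ => down S') (fun S _ => up {nB n} S)
  · intro S' hS'
    simp only [Finset.mem_filter, Finset.mem_univ, true_and] at hS' ⊢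
    obtain ⟨⟨⟨hok, hst⟩, hB⟩, hA⟩ := hS'
    have hXnot : xl (n+1) ∉ S' := (st_eq_one.1 hst).1
    have hxl : emb (xl n) ∈ S' := (dom_nA hok hA).resolve_right hXnot
    exact ⟨down_ok hok, st_eq_zero.2 (mem_down.2 hxl)⟩
  · intro S hS
    simp only [Finset.mem_filter, Finset.mem_univ, true_and] at hS ⊢
    obtain ⟨hok, hst⟩ := hS
    have hxl : xl n ∈ S := st_eq_zero.1 hst
    have hmemB : nB n ∈ up ({nB n} : Finset (Vtx (n+1))) S :=
      Finset.mem_union_right _ hBpat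
    have hmemxl : emb (xl n) ∈ up ({nB n} : Finset (Vtx (n+1))) S :=
      (mem_up_emb (hembpat _)).2 hxl
    have key : ∀ v ∈ up ({nB n} : Finset (Vtx (n+1))) S,
        (∃ u ∈ S, v = emb u) ∨ v = nB n := by
      intro v hv
      rcases Finset.mem_union.1 hv with h | h
      · obtain ⟨u, hu, hh⟩ := Finset.mem_map.1 h
        exact Or.inl ⟨u, hu, by simpa using hh.symm⟩
      · simp only [Finset.mem_singleton] at h
        tauto
    refine ⟨⟨⟨⟨?_, ?_⟩, ?_⟩, hmemB⟩, ?_⟩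
    · intro v hv w hw hadj
      rcases key v hv with ⟨u, hu, rfl⟩ | rfl <;>
        rcases key w hw with ⟨u', hu', rfl⟩ | rfl
      · exact hok.1 _ hu _ hu' ((adj_emb u u').1 hadj)
      · exact not_adj_emb_nB u hadj
      · exact not_adj_emb_nB u' hadj.symm
      · exact (metaHex _).loopless.irrefl _ hadj
    · intro v hv hne
      rcases vtx_cases v with ⟨u, rfl⟩ | rfl | rfl | rfl | rfl | rfl
      · have hu : u ∉ S := fun h => hv ((mem_up_emb (hembpat u)).2 h)
        have hux : u ≠ xl n := fun h => hu (h ▸ hxl)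
        obtain ⟨w, hw, hadj⟩ := hok.2 u hu hux
        exact ⟨emb w, (mem_up_emb (hembpat w)).2 hw, (adj_emb u w).2 hadj⟩
      · exact absurd (xl_succ n) hne
      · exact ⟨emb (xl n), hmemxl, (adj_nA _).2 (Or.inl rfl)⟩
      · exact absurd hmemB hv
      · exact ⟨nB n, hmemB, (adj_nC _).2 (Or.inl rfl)⟩
      · exact ⟨emb (xl n), hmemxl, (adj_nD _).2 (Or.inr rfl)⟩
    · refine st_eq_one.2 ⟨?_, nB n, hmemB, (adj_nX _).2 (Or.inr rfl)⟩
      rw [xl_succ, mem_up_new nX_not_mem_map]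
      exact hXpat
    · rw [mem_up_new nA_not_mem_map]
      exact hApat
  · intro S' hS'
    simp only [Finset.mem_filter, Finset.mem_univ, true_and] at hS'
    obtain ⟨⟨⟨hok, hst⟩, hB⟩, hA⟩ := hS'
    have hXnot : xl (n+1) ∉ S' := (st_eq_one.1 hst).1
    have hxl : emb (xl n) ∈ S' := (dom_nA hok hA).resolve_right hXnot
    have hC : nC n ∉ S' := fun h => hok.1 _ hB _ h ((adj_nB _).2 (Or.inr rfl))
    have hD : nD n ∉ S' := fun h => hok.1 _ h _ hxl ((adj_nD _).2 (Or.inr rfl))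
    ext v
    rcases vtx_cases v with ⟨u, rfl⟩ | rfl | rfl | rfl | rfl | rfl
    · rw [mem_up_emb (hembpat u), mem_down]
    · refine iff_of_false ?_ hXnot
      rw [mem_up_new nX_not_mem_map]; exact hXpat
    · refine iff_of_false ?_ hA
      rw [mem_up_new nA_not_mem_map]; exact hApat
    · exact iff_of_true (Finset.mem_union_right _ hBpat) hB
    · refine iff_of_false ?_ hC
      rw [mem_up_new nC_not_mem_map]; exact hCpat
    · refine iff_of_false ?_ hD
      rw [mem_up_new nD_not_mem_map]; exact hDpat
  · intro S hS
    ext u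
    rw [mem_down, mem_up_emb (hembpat u)]

lemma card_AC (n : ℕ) :
    (Finset.univ.filter fun S' : Finset (Vtx (n+1)) =>
        (Ok (n+1) S' ∧ st (n+1) S' = 1) ∧ nB n ∉ S').card
      = (Finset.univ.filter fun S : Finset (Vtx n) =>
          Ok n S ∧ (st n S = 1 ∨ st n S = 2)).card := by
  have hApat : nA n ∈ ({nA n, nC n} : Finset (Vtx (n+1))) := by simp
  have hCpat : nC n ∈ ({nA n, nC n} : Finset (Vtx (n+1))) := by simp
  have hXpat : nX n ∉ ({nA n, nC n} : Finset (Vtx (n+1))) := by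
    simp [nX, nA, nC]
  have hBpat : nB n ∉ ({nA n, nC n} : Finset (Vtx (n+1))) := by
    simp [nB, nA, nC, Prod.ext_iff, Fin.ext_iff] <;> decide
  have hDpat : nD n ∉ ({nA n, nC n} : Finset (Vtx (n+1))) := by
    simp [nD, nA, nC, Prod.ext_iff, Fin.ext_iff] <;> decide
  have hembpat : ∀ u : Vtx n, emb u ∉ ({nA n, nC n} : Finset (Vtx (n+1))) := by
    intro u
    simp only [Finset.mem_insert, Finset.mem_singleton]
    rintro (h | h)
    exacts [emb_ne_inr u 0 h, emb_ne_inr u 2 h]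
  apply Finset.card_bij' (fun S' _ => down S') (fun S _ => up {nA n, nC n} S)
  · intro S' hS'
    simp only [Finset.mem_filter, Finset.mem_univ, true_and] at hS' ⊢
    obtain ⟨⟨hok, hst⟩, hB⟩ := hS'
    have hXnot : xl (n+1) ∉ S' := (st_eq_one.1 hst).1
    have hA : nA n ∈ S' := (dom_nX hst).resolve_right hB
    have hxl : emb (xl n) ∉ S' := fun h => hok.1 _ hA _ h ((adj_nA _).2 (Or.inl rfl))
    refine ⟨down_ok hok, ?_⟩
    have hxld : xl n ∉ down S' := fun h => hxl (mem_down.1 h)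
    rcases st_cases (down S') with h0 | h1 | h2
    · exact absurd (st_eq_zero.1 h0) hxld
    · exact Or.inl h1
    · exact Or.inr h2
  · intro S hS
    simp only [Finset.mem_filter, Finset.mem_univ, true_and] at hS ⊢
    obtain ⟨hok, hst⟩ := hS
    have hxl : xl n ∉ S := by
      rcases hst with h1 | h1
      exacts [(st_eq_one.1 h1).1, (st_eq_two.1 h1).1]
    have hmemA : nA n ∈ up ({nA n, nC n} : Finset (Vtx (n+1))) S :=
      Finset.mem_union_right _ hApat
    have hmemC : nC n ∈ up ({nA n, nC n} : Finset (Vtx (n+1))) S :=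
      Finset.mem_union_right _ hCpat
    have key : ∀ v ∈ up ({nA n, nC n} : Finset (Vtx (n+1))) S,
        (∃ u ∈ S, v = emb u) ∨ v = nA n ∨ v = nC n := by
      intro v hv
      rcases Finset.mem_union.1 hv with h | h
      · obtain ⟨u, hu, hh⟩ := Finset.mem_map.1 h
        exact Or.inl ⟨u, hu, by simpa using hh.symm⟩
      · simp only [Finset.mem_insert, Finset.mem_singleton] at h
        tauto
    refine ⟨⟨⟨?_, ?_⟩, ?_⟩, ?_⟩
    · intro v hv w hw hadj
      rcases key v hv with ⟨u, hu, rfl⟩ | rfl | rfl <;>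
        rcases key w hw with ⟨u', hu', rfl⟩ | rfl | rfl
      · exact hok.1 _ hu _ hu' ((adj_emb u u').1 hadj)
      · exact hxl (((adj_emb_nA u).1 hadj) ▸ hu)
      · exact not_adj_emb_nC u hadj
      · exact hxl (((adj_emb_nA u').1 hadj.symm) ▸ hu')
      · exact (metaHex _).loopless.irrefl _ hadj
      · rcases (adj_nA _).1 hadj with h | h
        · exact absurd h (by simp [nC, xl, emb])
        · exact absurd h (by simp [nC, nX])
      · exact not_adj_emb_nC u' hadj.symm
      · rcases (adj_nA _).1 hadj.symm with h | h
        · exact absurd h (by simp [nC, xl, emb])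
        · exact absurd h (by simp [nC, nX])
      · exact (metaHex _).loopless.irrefl _ hadj
    · intro v hv hne
      rcases vtx_cases v with ⟨u, rfl⟩ | rfl | rfl | rfl | rfl | rfl
      · have hu : u ∉ S := fun h => hv ((mem_up_emb (hembpat u)).2 h)
        by_cases hux : u = xl n
        · exact ⟨nA n, hmemA, (adj_emb_nA u).2 hux⟩
        · obtain ⟨w, hw, hadj⟩ := hok.2 u hu hux
          exact ⟨emb w, (mem_up_emb (hembpat w)).2 hw, (adj_emb u w).2 hadj⟩
      · exact absurd (xl_succ n) hne
      · exact absurd hmemA hv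
      · exact ⟨nC n, hmemC, (adj_nB _).2 (Or.inr rfl)⟩
      · exact absurd hmemC hv
      · exact ⟨nC n, hmemC, (adj_nD _).2 (Or.inl rfl)⟩
    · refine st_eq_one.2 ⟨?_, nA n, hmemA, (adj_nX _).2 (Or.inl rfl)⟩
      rw [xl_succ, mem_up_new nX_not_mem_map]
      exact hXpat
    · rw [mem_up_new nB_not_mem_map]
      exact hBpat
  · intro S' hS'
    simp only [Finset.mem_filter, Finset.mem_univ, true_and] at hS'
    obtain ⟨⟨hok, hst⟩, hB⟩ := hS'
    have hXnot : xl (n+1) ∉ S' := (st_eq_one.1 hst).1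
    have hA : nA n ∈ S' := (dom_nX hst).resolve_right hB
    have hxl : emb (xl n) ∉ S' := fun h => hok.1 _ hA _ h ((adj_nA _).2 (Or.inl rfl))
    have hC : nC n ∈ S' := (dom_nB hok hB).resolve_left hXnot
    have hD : nD n ∉ S' := fun h => hok.1 _ hC _ h ((adj_nC _).2 (Or.inr rfl))
    ext v
    rcases vtx_cases v with ⟨u, rfl⟩ | rfl | rfl | rfl | rfl | rfl
    · rw [mem_up_emb (hembpat u), mem_down]
    · refine iff_of_false ?_ hXnot
      rw [mem_up_new nX_not_mem_map]; exact hXpat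
    · exact iff_of_true (Finset.mem_union_right _ hApat) hA
    · refine iff_of_false ?_ hB
      rw [mem_up_new nB_not_mem_map]; exact hBpat
    · exact iff_of_true (Finset.mem_union_right _ hCpat) hC
    · refine iff_of_false ?_ hD
      rw [mem_up_new nD_not_mem_map]; exact hDpat
  · intro S hS
    ext u
    rw [mem_down, mem_up_emb (hembpat u)]

lemma card_ABD (n : ℕ) :
    (Finset.univ.filter fun S' : Finset (Vtx (n+1)) =>
        ((Ok (n+1) S' ∧ st (n+1) S' = 1) ∧ nB n ∈ S') ∧ nA n ∈ S').card
      = (Finset.univ.filter fun S : Finset (Vtx n) =>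
          Ok n S ∧ (st n S = 1 ∨ st n S = 2)).card := by
  have hApat : nA n ∈ ({nA n, nB n, nD n} : Finset (Vtx (n+1))) := by simp
  have hBpat : nB n ∈ ({nA n, nB n, nD n} : Finset (Vtx (n+1))) := by simp
  have hDpat : nD n ∈ ({nA n, nB n, nD n} : Finset (Vtx (n+1))) := by simp
  have hXpat : nX n ∉ ({nA n, nB n, nD n} : Finset (Vtx (n+1))) := by
    simp [nX, nA, nB, nD]
  have hCpat : nC n ∉ ({nA n, nB n, nD n} : Finset (Vtx (n+1))) := by
    simp [nC, nA, nB, nD, Prod.ext_iff, Fin.ext_iff] <;> decide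
  have hembpat : ∀ u : Vtx n, emb u ∉ ({nA n, nB n, nD n} : Finset (Vtx (n+1))) := by
    intro u
    simp only [Finset.mem_insert, Finset.mem_singleton]
    rintro (h | h | h)
    exacts [emb_ne_inr u 0 h, emb_ne_inr u 1 h, emb_ne_inr u 3 h]
  apply Finset.card_bij' (fun S' _ => down S') (fun S _ => up {nA n, nB n, nD n} S)
  · intro S' hS'
    simp only [Finset.mem_filter, Finset.mem_univ, true_and] at hS' ⊢
    obtain ⟨⟨⟨hok, hst⟩, hB⟩, hA⟩ := hS'
    have hxl : emb (xl n) ∉ S' := fun h => hok.1 _ hA _ h ((adj_nA _).2 (Or.inl rfl))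
    refine ⟨down_ok hok, ?_⟩
    have hxld : xl n ∉ down S' := fun h => hxl (mem_down.1 h)
    rcases st_cases (down S') with h0 | h1 | h2
    · exact absurd (st_eq_zero.1 h0) hxld
    · exact Or.inl h1
    · exact Or.inr h2
  · intro S hS
    simp only [Finset.mem_filter, Finset.mem_univ, true_and] at hS ⊢
    obtain ⟨hok, hst⟩ := hS
    have hxl : xl n ∉ S := by
      rcases hst with h1 | h1
      exacts [(st_eq_one.1 h1).1, (st_eq_two.1 h1).1]
    have hmemA : nA n ∈ up ({nA n, nB n, nD n} : Finset (Vtx (n+1))) S :=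
      Finset.mem_union_right _ hApat
    have hmemB : nB n ∈ up ({nA n, nB n, nD n} : Finset (Vtx (n+1))) S :=
      Finset.mem_union_right _ hBpat
    have hmemD : nD n ∈ up ({nA n, nB n, nD n} : Finset (Vtx (n+1))) S :=
      Finset.mem_union_right _ hDpat
    have key : ∀ v ∈ up ({nA n, nB n, nD n} : Finset (Vtx (n+1))) S,
        (∃ u ∈ S, v = emb u) ∨ v = nA n ∨ v = nB n ∨ v = nD n := by
      intro v hv
      rcases Finset.mem_union.1 hv with h | h
      · obtain ⟨u, hu, hh⟩ := Finset.mem_map.1 h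
        exact Or.inl ⟨u, hu, by simpa using hh.symm⟩
      · simp only [Finset.mem_insert, Finset.mem_singleton] at h
        tauto
    refine ⟨⟨⟨⟨?_, ?_⟩, ?_⟩, hmemB⟩, hmemA⟩
    · intro v hv w hw hadj
      rcases key v hv with ⟨u, hu, rfl⟩ | rfl | rfl | rfl <;>
        rcases key w hw with ⟨u', hu', rfl⟩ | rfl | rfl | rfl
      · exact hok.1 _ hu _ hu' ((adj_emb u u').1 hadj)
      · exact hxl (((adj_emb_nA u).1 hadj) ▸ hu)
      · exact not_adj_emb_nB u hadj
      · exact hxl (((adj_emb_nD u).1 hadj) ▸ hu)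
      · exact hxl (((adj_emb_nA u').1 hadj.symm) ▸ hu')
      · exact (metaHex _).loopless.irrefl _ hadj
      · rcases (adj_nA _).1 hadj with h | h
        · exact absurd h (by simp [nB, xl, emb])
        · exact absurd h (by simp [nB, nX])
      · rcases (adj_nA _).1 hadj with h | h
        · exact absurd h (by simp [nD, xl, emb])
        · exact absurd h (by simp [nD, nX])
      · exact not_adj_emb_nB u' hadj.symm
      · rcases (adj_nA _).1 hadj.symm with h | h
        · exact absurd h (by simp [nB, xl, emb])
        · exact absurd h (by simp [nB, nX])
      · exact (metaHex _).loopless.irrefl _ hadj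
      · rcases (adj_nB _).1 hadj with h | h
        · exact absurd h (by simp [nD, nX])
        · exact absurd h (by simp [nD, nC, Prod.ext_iff, Fin.ext_iff] <;> decide)
      · exact hxl (((adj_emb_nD u').1 hadj.symm) ▸ hu')
      · rcases (adj_nA _).1 hadj.symm with h | h
        · exact absurd h (by simp [nD, xl, emb])
        · exact absurd h (by simp [nD, nX])
      · rcases (adj_nB _).1 hadj.symm with h | h
        · exact absurd h (by simp [nD, nX])
        · exact absurd h (by simp [nD, nC, Prod.ext_iff, Fin.ext_iff] <;> decide)
      · exact (metaHex _).loopless.irrefl _ hadj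
    · intro v hv hne
      rcases vtx_cases v with ⟨u, rfl⟩ | rfl | rfl | rfl | rfl | rfl
      · have hu : u ∉ S := fun h => hv ((mem_up_emb (hembpat u)).2 h)
        by_cases hux : u = xl n
        · exact ⟨nA n, hmemA, (adj_emb_nA u).2 hux⟩
        · obtain ⟨w, hw, hadj⟩ := hok.2 u hu hux
          exact ⟨emb w, (mem_up_emb (hembpat w)).2 hw, (adj_emb u w).2 hadj⟩
      · exact absurd (xl_succ n) hne
      · exact absurd hmemA hv
      · exact absurd hmemB hv
      · exact ⟨nB n, hmemB, (adj_nC _).2 (Or.inl rfl)⟩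
      · exact absurd hmemD hv
    · refine st_eq_one.2 ⟨?_, nA n, hmemA, (adj_nX _).2 (Or.inl rfl)⟩
      rw [xl_succ, mem_up_new nX_not_mem_map]
      exact hXpat
  · intro S' hS'
    simp only [Finset.mem_filter, Finset.mem_univ, true_and] at hS'
    obtain ⟨⟨⟨hok, hst⟩, hB⟩, hA⟩ := hS'
    have hXnot : xl (n+1) ∉ S' := (st_eq_one.1 hst).1
    have hxl : emb (xl n) ∉ S' := fun h => hok.1 _ hA _ h ((adj_nA _).2 (Or.inl rfl))
    have hC : nC n ∉ S' := fun h => hok.1 _ hB _ h ((adj_nB _).2 (Or.inr rfl))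
    have hD : nD n ∈ S' := by
      by_contra hD
      rcases dom_nD hok hD with h | h
      exacts [hC h, hxl h]
    ext v
    rcases vtx_cases v with ⟨u, rfl⟩ | rfl | rfl | rfl | rfl | rfl
    · rw [mem_up_emb (hembpat u), mem_down]
    · refine iff_of_false ?_ hXnot
      rw [mem_up_new nX_not_mem_map]; exact hXpat
    · exact iff_of_true (Finset.mem_union_right _ hApat) hA
    · exact iff_of_true (Finset.mem_union_right _ hBpat) hB
    · refine iff_of_false ?_ hC
      rw [mem_up_new nC_not_mem_map]; exact hCpat
    · exact iff_of_true (Finset.mem_union_right _ hDpat) hD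
  · intro S hS
    ext u
    rw [mem_down, mem_up_emb (hembpat u)]

lemma card_C (n : ℕ) :
    (Finset.univ.filter fun S' : Finset (Vtx (n+1)) =>
        Ok (n+1) S' ∧ st (n+1) S' = 2).card
      = (Finset.univ.filter fun S : Finset (Vtx n) =>
          Ok n S ∧ st n S = 0).card := by
  have hCpat : nC n ∈ ({nC n} : Finset (Vtx (n+1))) := by simp
  have hXpat : nX n ∉ ({nC n} : Finset (Vtx (n+1))) := by simp [nX, nC]
  have hApat : nA n ∉ ({nC n} : Finset (Vtx (n+1))) := by
    simp [nA, nC, Prod.ext_iff, Fin.ext_iff] <;> decide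
  have hBpat : nB n ∉ ({nC n} : Finset (Vtx (n+1))) := by
    simp [nB, nC, Prod.ext_iff, Fin.ext_iff] <;> decide
  have hDpat : nD n ∉ ({nC n} : Finset (Vtx (n+1))) := by
    simp [nD, nC, Prod.ext_iff, Fin.ext_iff] <;> decide
  have hembpat : ∀ u : Vtx n, emb u ∉ ({nC n} : Finset (Vtx (n+1))) := by
    intro u
    simp only [Finset.mem_singleton]
    exact emb_ne_inr u 2
  apply Finset.card_bij' (fun S' _ => down S') (fun S _ => up {nC n} S)
  · intro S' hS'
    simp only [Finset.mem_filter, Finset.mem_univ, true_and] at hS' ⊢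
    obtain ⟨hok, hst⟩ := hS'
    obtain ⟨hXnot, hno⟩ := st_eq_two.1 hst
    have hA : nA n ∉ S' := fun h => hno ⟨nA n, h, (adj_nX _).2 (Or.inl rfl)⟩
    have hxl : emb (xl n) ∈ S' := (dom_nA hok hA).resolve_right hXnot
    exact ⟨down_ok hok, st_eq_zero.2 (mem_down.2 hxl)⟩
  · intro S hS
    simp only [Finset.mem_filter, Finset.mem_univ, true_and] at hS ⊢
    obtain ⟨hok, hst⟩ := hS
    have hxl : xl n ∈ S := st_eq_zero.1 hst
    have hmemC : nC n ∈ up ({nC n} : Finset (Vtx (n+1))) S :=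
      Finset.mem_union_right _ hCpat
    have hmemxl : emb (xl n) ∈ up ({nC n} : Finset (Vtx (n+1))) S :=
      (mem_up_emb (hembpat _)).2 hxl
    have key : ∀ v ∈ up ({nC n} : Finset (Vtx (n+1))) S,
        (∃ u ∈ S, v = emb u) ∨ v = nC n := by
      intro v hv
      rcases Finset.mem_union.1 hv with h | h
      · obtain ⟨u, hu, hh⟩ := Finset.mem_map.1 h
        exact Or.inl ⟨u, hu, by simpa using hh.symm⟩
      · simp only [Finset.mem_singleton] at h
        tauto
    refine ⟨⟨?_, ?_⟩, ?_⟩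
    · intro v hv w hw hadj
      rcases key v hv with ⟨u, hu, rfl⟩ | rfl <;>
        rcases key w hw with ⟨u', hu', rfl⟩ | rfl
      · exact hok.1 _ hu _ hu' ((adj_emb u u').1 hadj)
      · exact not_adj_emb_nC u hadj
      · exact not_adj_emb_nC u' hadj.symm
      · exact (metaHex _).loopless.irrefl _ hadj
    · intro v hv hne
      rcases vtx_cases v with ⟨u, rfl⟩ | rfl | rfl | rfl | rfl | rfl
      · have hu : u ∉ S := fun h => hv ((mem_up_emb (hembpat u)).2 h)
        have hux : u ≠ xl n := fun h => hu (h ▸ hxl)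
        obtain ⟨w, hw, hadj⟩ := hok.2 u hu hux
        exact ⟨emb w, (mem_up_emb (hembpat w)).2 hw, (adj_emb u w).2 hadj⟩
      · exact absurd (xl_succ n) hne
      · exact ⟨emb (xl n), hmemxl, (adj_nA _).2 (Or.inl rfl)⟩
      · exact ⟨nC n, hmemC, (adj_nB _).2 (Or.inr rfl)⟩
      · exact absurd hmemC hv
      · exact ⟨nC n, hmemC, (adj_nD _).2 (Or.inl rfl)⟩
    · refine st_eq_two.2 ⟨?_, ?_⟩
      · rw [xl_succ, mem_up_new nX_not_mem_map]
        exact hXpat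
      · rintro ⟨w, hw, hadj⟩
        rcases (adj_nX w).1 hadj with rfl | rfl
        · rw [mem_up_new nA_not_mem_map] at hw
          exact hApat hw
        · rw [mem_up_new nB_not_mem_map] at hw
          exact hBpat hw
  · intro S' hS'
    simp only [Finset.mem_filter, Finset.mem_univ, true_and] at hS'
    obtain ⟨hok, hst⟩ := hS'
    obtain ⟨hXnot, hno⟩ := st_eq_two.1 hst
    have hA : nA n ∉ S' := fun h => hno ⟨nA n, h, (adj_nX _).2 (Or.inl rfl)⟩
    have hB : nB n ∉ S' := fun h => hno ⟨nB n, h, (adj_nX _).2 (Or.inr rfl)⟩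
    have hxl : emb (xl n) ∈ S' := (dom_nA hok hA).resolve_right hXnot
    have hC : nC n ∈ S' := (dom_nB hok hB).resolve_left hXnot
    have hD : nD n ∉ S' := fun h => hok.1 _ h _ hxl ((adj_nD _).2 (Or.inr rfl))
    ext v
    rcases vtx_cases v with ⟨u, rfl⟩ | rfl | rfl | rfl | rfl | rfl
    · rw [mem_up_emb (hembpat u), mem_down]
    · refine iff_of_false ?_ hXnot
      rw [mem_up_new nX_not_mem_map]; exact hXpat
    · refine iff_of_false ?_ hA
      rw [mem_up_new nA_not_mem_map]; exact hApat
    · refine iff_of_false ?_ hB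
      rw [mem_up_new nB_not_mem_map]; exact hBpat
    · exact iff_of_true (Finset.mem_union_right _ hCpat) hC
    · refine iff_of_false ?_ hD
      rw [mem_up_new nD_not_mem_map]; exact hDpat
  · intro S hS
    ext u
    rw [mem_down, mem_up_emb (hembpat u)]

lemma NN_or (n : ℕ) (s1 s2 : ℕ) (h : s1 ≠ s2) :
    (Finset.univ.filter fun S : Finset (Vtx n) =>
        Ok n S ∧ (st n S = s1 ∨ st n S = s2)).card = NN n s1 + NN n s2 := by
  rw [NN, NN, ← Finset.card_union_of_disjoint, ← Finset.filter_or]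
  · congr 1
    apply Finset.filter_congr
    intro S _
    tauto
  · rw [Finset.disjoint_left]
    rintro S hS hS'
    simp only [Finset.mem_filter] at hS hS'
    omega

lemma split_card {n : ℕ} (Q : Finset (Vtx n) → Prop) [DecidablePred Q]
    (R : Finset (Vtx n) → Prop) [DecidablePred R] :
    (Finset.univ.filter Q).card
      = (Finset.univ.filter fun S => Q S ∧ R S).card
        + (Finset.univ.filter fun S => Q S ∧ ¬ R S).card := by
  rw [← Finset.filter_filter, ← Finset.filter_filter,
    Finset.card_filter_add_card_filter_not]

lemma NN_succ_0 (n : ℕ) : NN (n+1) 0 = NN n 0 + 2 * NN n 1 + NN n 2 := by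
  rw [NN, split_card _ (fun S' => nD n ∈ S'), card_XD, card_XC, NN_or _ _ _ (by norm_num),
    NN_or _ _ _ (by norm_num)]
  ring

lemma NN_succ_1 (n : ℕ) : NN (n+1) 1 = NN n 0 + 2 * NN n 1 + 2 * NN n 2 := by
  have h0 : (Finset.univ.filter fun S : Finset (Vtx n) => Ok n S ∧ st n S = 0).card
      = NN n 0 := rfl
  rw [NN, split_card _ (fun S' => nB n ∈ S'),
    split_card (fun S' => (Ok (n+1) S' ∧ st (n+1) S' = 1) ∧ nB n ∈ S') (fun S' => nA n ∈ S'),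
    card_ABD, card_B, card_AC, NN_or _ _ _ (by norm_num), h0]
  ring

lemma NN_succ_2 (n : ℕ) : NN (n+1) 2 = NN n 0 := card_C n

lemma m_rec (n : ℕ) :
    numIDSMetaHex (n+3) = 3 * numIDSMetaHex (n+2) + numIDSMetaHex (n+1)
      + 2 * numIDSMetaHex n := by
  have e10 : NN (n+1) 0 = NN n 0 + 2 * NN n 1 + NN n 2 := NN_succ_0 n
  have e11 : NN (n+1) 1 = NN n 0 + 2 * NN n 1 + 2 * NN n 2 := NN_succ_1 n
  have e12 : NN (n+1) 2 = NN n 0 := NN_succ_2 n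
  have e20 : NN (n+2) 0 = NN (n+1) 0 + 2 * NN (n+1) 1 + NN (n+1) 2 := NN_succ_0 (n+1)
  have e21 : NN (n+2) 1 = NN (n+1) 0 + 2 * NN (n+1) 1 + 2 * NN (n+1) 2 := NN_succ_1 (n+1)
  have e22 : NN (n+2) 2 = NN (n+1) 0 := NN_succ_2 (n+1)
  have e30 : NN (n+3) 0 = NN (n+2) 0 + 2 * NN (n+2) 1 + NN (n+2) 2 := NN_succ_0 (n+2)
  have e31 : NN (n+3) 1 = NN (n+2) 0 + 2 * NN (n+2) 1 + 2 * NN (n+2) 2 := NN_succ_1 (n+2)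
  rw [numIDS_eq, numIDS_eq, numIDS_eq, numIDS_eq]
  omega

lemma m_zero : numIDSMetaHex 0 = 1 := by
  rw [numIDS_eq, NN_zero_zero, NN_zero_one]

lemma m_one : numIDSMetaHex 1 = 5 := by
  have e10 : NN 1 0 = NN 0 0 + 2 * NN 0 1 + NN 0 2 := NN_succ_0 0
  have e11 : NN 1 1 = NN 0 0 + 2 * NN 0 1 + 2 * NN 0 2 := NN_succ_1 0
  have h0 := NN_zero_zero; have h1 := NN_zero_one; have h2 := NN_zero_two
  rw [numIDS_eq]
  omega

lemma m_two : numIDSMetaHex 2 = 19 := by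
  have e10 : NN 1 0 = NN 0 0 + 2 * NN 0 1 + NN 0 2 := NN_succ_0 0
  have e11 : NN 1 1 = NN 0 0 + 2 * NN 0 1 + 2 * NN 0 2 := NN_succ_1 0
  have e12 : NN 1 2 = NN 0 0 := NN_succ_2 0
  have e20 : NN 2 0 = NN 1 0 + 2 * NN 1 1 + NN 1 2 := NN_succ_0 1
  have e21 : NN 2 1 = NN 1 0 + 2 * NN 1 1 + 2 * NN 1 2 := NN_succ_1 1
  have h0 := NN_zero_zero; have h1 := NN_zero_one; have h2 := NN_zero_two
  rw [numIDS_eq]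
  omega

end MH

open PowerSeries in
/-- In `ℚ⟦X⟧`, `(1 - 3X - X² - 2X³) · ∑_{n≥0} m_n Xⁿ = 1 + 2X + 3X²`, where `m n`
is the number of independent dominating sets of `M n` (and `m 0 = 1`, `M 0` being
the one-vertex graph). -/
theorem numIDSMetaHex_generating_function :
    (1 - 3 * PowerSeries.X - PowerSeries.X ^ 2 - 2 * PowerSeries.X ^ 3) *
        PowerSeries.mk (fun n : ℕ => (numIDSMetaHex n : ℚ)) =
      1 + 2 * PowerSeries.X + 3 * PowerSeries.X ^ 2 := by
  set M : ℚ⟦X⟧ := PowerSeries.mk (fun n : ℕ => (numIDSMetaHex n : ℚ)) with hM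
  have h3 : (3 : ℚ⟦X⟧) = C 3 := (map_ofNat (C) 3).symm
  have h2 : (2 : ℚ⟦X⟧) = C 2 := (map_ofNat (C) 2).symm
  have key : (1 - 3 * X - X ^ 2 - 2 * X ^ 3) * M
      = M - (C 3) * (X ^ 1 * M) - X ^ 2 * M - (C 2) * (X ^ 3 * M) := by
    rw [h3, h2]; ring
  have rhs : (1 + 2 * X + 3 * X ^ 2 : ℚ⟦X⟧) = 1 + C 2 * X ^ 1 + C 3 * X ^ 2 := by
    rw [h3, h2]; ring
  rw [key, rhs]
  ext n
  simp only [map_sub, map_add, coeff_C_mul, coeff_X_pow_mul', hM, coeff_mk,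
    PowerSeries.coeff_one, coeff_X_pow]
  rcases n with _ | _ | _ | k
  · norm_num [MH.m_zero]
  · norm_num [MH.m_zero, MH.m_one]
  · norm_num [MH.m_zero, MH.m_one, MH.m_two]
  · have hrec := MH.m_rec k
    have c1 : k + 3 - 1 = k + 2 := by omega
    have c2 : k + 3 - 2 = k + 1 := by omega
    have c3 : k + 3 - 3 = k := by omega
    rw [if_pos (by omega), if_pos (by omega), if_pos (by omega), c1, c2, c3,
      if_neg (by omega), if_neg (by omega), if_neg (by omega)]
    push_cast [hrec]
    ring
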